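/- Theorem 6 (Spectrum of AᵀA − I): Let D > 0, τ > 0, dx > 0, x_0 ∈ ℝ, N ≥ 1, set x_ℓ = x_0 + ℓ·dx and G_ℓ = (1/2)[erf((x_ℓ + dx/2)/√(4Dτ)) − erf((x_ℓ − dx/2)/√(4Dτ))] for ℓ = 0, …, N−1, and let A = circ(G_0, …, G_{N−1}) be the circulant matrix with these entries. Then every complex eigenvalue λ of A satisfies |λ| < 1, and every (real) eigenvalue of the symmetric matrix AᵀA − I is strictly negative. -/

import Mathlib

open MeasureTheory intervalIntegral Matrix

noncomputable section

/-- The error function `erf(z) = (2/√π) ∫_0^z exp(-s²) ds`. -/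
def erf (z : ℝ) : ℝ :=
  (2 / Real.sqrt Real.pi) * ∫ s in (0:ℝ)..z, Real.exp (-(s ^ 2))

/-- The grid points `x_ℓ = x₀ + ℓ·dx`. -/
def gridPt (x₀ dx : ℝ) (ℓ : ℕ) : ℝ := x₀ + ℓ * dx

/-- The discrete Green's coefficients
`G_ℓ = (1/2)[erf((x_ℓ + dx/2)/√(4Dτ)) - erf((x_ℓ - dx/2)/√(4Dτ))]`. -/
def Gcoef (D τ x₀ dx : ℝ) (ℓ : ℕ) : ℝ :=
  (1/2) * (erf ((gridPt x₀ dx ℓ + dx/2) / Real.sqrt (4*D*τ))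
    - erf ((gridPt x₀ dx ℓ - dx/2) / Real.sqrt (4*D*τ)))

lemma gauss_cont : Continuous fun s : ℝ => Real.exp (-(s ^ 2)) := by
  fun_prop

lemma gauss_integrable : Integrable (fun s : ℝ => Real.exp (-(s ^ 2))) := by
  simpa using integrable_exp_neg_mul_sq one_pos

lemma gauss_Ioi : ∫ s in Set.Ioi (0:ℝ), Real.exp (-(s ^ 2)) = Real.sqrt Real.pi / 2 := by
  have := integral_gaussian_Ioi 1
  simpa using this

lemma erf_strictMono : StrictMono erf := by
  intro a b hab
  have hint : ∀ u v : ℝ, IntervalIntegrable (fun s : ℝ => Real.exp (-(s ^ 2))) volume u v :=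
    fun u v => gauss_cont.intervalIntegrable u v
  have key : (∫ s in (0:ℝ)..a, Real.exp (-(s ^ 2))) < ∫ s in (0:ℝ)..b, Real.exp (-(s ^ 2)) := by
    have hadd := intervalIntegral.integral_add_adjacent_intervals (hint 0 a) (hint a b)
    have hpos : 0 < ∫ s in a..b, Real.exp (-(s ^ 2)) :=
      intervalIntegral.intervalIntegral_pos_of_pos (hint a b) (fun x => Real.exp_pos _) hab
    linarith
  have hc : 0 < 2 / Real.sqrt Real.pi := by
    positivity
  exact mul_lt_mul_of_pos_left key hc

lemma erf_lt_one (z : ℝ) : erf z < 1 := by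
  have hpi : 0 < Real.sqrt Real.pi := Real.sqrt_pos.mpr Real.pi_pos
  have hc : 0 < 2 / Real.sqrt Real.pi := by positivity
  rcases le_or_gt z 0 with hz | hz
  · have h1 : (∫ s in (0:ℝ)..z, Real.exp (-(s ^ 2))) ≤ 0 := by
      rw [intervalIntegral.integral_symm]
      simp only [neg_nonpos]
      exact intervalIntegral.integral_nonneg hz (fun x _ => (Real.exp_pos _).le)
    have : erf z ≤ 0 := mul_nonpos_of_nonneg_of_nonpos hc.le h1
    linarith
  · have hIoc : (∫ s in (0:ℝ)..z, Real.exp (-(s ^ 2)))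
        = ∫ s in Set.Ioc (0:ℝ) z, Real.exp (-(s ^ 2)) :=
      intervalIntegral.integral_of_le hz.le
    have hsplit : (∫ s in Set.Ioc (0:ℝ) z, Real.exp (-(s ^ 2)))
        + ∫ s in Set.Ioi z, Real.exp (-(s ^ 2)) = Real.sqrt Real.pi / 2 := by
      rw [← gauss_Ioi, ← MeasureTheory.setIntegral_union (Set.Ioc_disjoint_Ioi le_rfl)
          measurableSet_Ioi gauss_integrable.integrableOn gauss_integrable.integrableOn,
        Set.Ioc_union_Ioi_eq_Ioi hz.le]
    have htail : 0 < ∫ s in Set.Ioi z, Real.exp (-(s ^ 2)) := by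
      refine (MeasureTheory.setIntegral_pos_iff_support_of_nonneg_ae
        (Filter.Eventually.of_forall fun x => (Real.exp_pos _).le)
        gauss_integrable.integrableOn).mpr ?_
      have : (Function.support fun s : ℝ => Real.exp (-(s ^ 2))) = Set.univ := by
        ext x; simp [(Real.exp_pos _).ne']
      rw [this, Set.univ_inter]
      simp
    have hlt : (∫ s in (0:ℝ)..z, Real.exp (-(s ^ 2))) < Real.sqrt Real.pi / 2 := by
      rw [hIoc]; linarith
    have := mul_lt_mul_of_pos_left hlt hc
    rw [erf] at *
    calc (2 / Real.sqrt Real.pi) * ∫ s in (0:ℝ)..z, Real.exp (-(s ^ 2))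
        < (2 / Real.sqrt Real.pi) * (Real.sqrt Real.pi / 2) := this
      _ = 1 := by field_simp
  
lemma erf_neg (z : ℝ) : erf (-z) = - erf z := by
  have h := intervalIntegral.integral_comp_neg (a := (0:ℝ)) (b := z)
    (fun s : ℝ => Real.exp (-(s ^ 2)))
  simp only [neg_zero, neg_sq] at h
  rw [erf, erf]
  have e := intervalIntegral.integral_symm (f := fun s : ℝ => Real.exp (-(s ^ 2)))
    (μ := volume) (0:ℝ) (-z)
  rw [show (∫ s in (0:ℝ)..(-z), Real.exp (-(s ^ 2))) = -∫ s in (0:ℝ)..z, Real.exp (-(s ^ 2))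
    from by linarith]
  ring

lemma neg_one_lt_erf (z : ℝ) : -1 < erf z := by
  have := erf_lt_one (-z)
  rw [erf_neg] at this
  linarith

variable {D τ dx x₀ : ℝ}

lemma Gcoef_pos (hD : 0 < D) (hτ : 0 < τ) (hdx : 0 < dx) (ℓ : ℕ) :
    0 < Gcoef D τ x₀ dx ℓ := by
  have hc : 0 < Real.sqrt (4*D*τ) := Real.sqrt_pos.mpr (by positivity)
  have harg : (gridPt x₀ dx ℓ - dx/2) / Real.sqrt (4*D*τ)
      < (gridPt x₀ dx ℓ + dx/2) / Real.sqrt (4*D*τ) :=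
    (div_lt_div_iff_of_pos_right hc).mpr (by linarith)
  have := erf_strictMono harg
  simp only [Gcoef]
  linarith

lemma sum_Gcoef_lt_one (hD : 0 < D) (hτ : 0 < τ) (hdx : 0 < dx) (N : ℕ) :
    ∑ ℓ ∈ Finset.range N, Gcoef D τ x₀ dx ℓ < 1 := by
  set c := Real.sqrt (4*D*τ)
  set f : ℕ → ℝ := fun ℓ => erf ((x₀ - dx/2 + ℓ*dx)/c) with hf
  have hG : ∀ ℓ, Gcoef D τ x₀ dx ℓ = (1/2) * (f (ℓ+1) - f ℓ) := by
    intro ℓ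
    have e1 : (gridPt x₀ dx ℓ + dx/2) = x₀ - dx/2 + (↑(ℓ+1))*dx := by
      simp [gridPt]; push_cast; ring
    have e2 : (gridPt x₀ dx ℓ - dx/2) = x₀ - dx/2 + (ℓ:ℝ)*dx := by
      simp [gridPt]; ring
    rw [Gcoef, e1, e2]
  have hsum : ∑ ℓ ∈ Finset.range N, Gcoef D τ x₀ dx ℓ = (1/2) * (f N - f 0) := by
    simp only [hG]
    rw [← Finset.mul_sum, Finset.sum_range_sub]
  rw [hsum]
  have h1 : f N < 1 := erf_lt_one _
  have h2 : -1 < f 0 := neg_one_lt_erf _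
  linarith

lemma eig_of_mem_spectrum {K : Type*} [Field K] {n : Type*} [Fintype n] [DecidableEq n]
    (M : Matrix n n K) (μ : K) (h : μ ∈ spectrum K M) :
    ∃ v : n → K, v ≠ 0 ∧ M.mulVec v = μ • v := by
  rw [spectrum.mem_iff, Matrix.isUnit_iff_isUnit_det, isUnit_iff_ne_zero, not_not] at h
  obtain ⟨v, hv, hMv⟩ := (Matrix.exists_mulVec_eq_zero_iff).mpr h
  refine ⟨v, hv, ?_⟩
  rw [Algebra.algebraMap_eq_smul_one, Matrix.sub_mulVec, Matrix.smul_mulVec,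
    Matrix.one_mulVec, sub_eq_zero] at hMv
  exact hMv.symm

lemma gersh_complex {n : Type*} [Fintype n] [Nonempty n] (A : Matrix n n ℂ) (lam : ℂ)
    (v : n → ℂ) (hv : v ≠ 0) (hAv : A.mulVec v = lam • v) (r : ℝ)
    (hr : ∀ i, ∑ j, ‖A i j‖ ≤ r) : ‖lam‖ ≤ r := by
  obtain ⟨i, -, hi⟩ := Finset.exists_max_image Finset.univ (fun j => ‖v j‖)
    ⟨Classical.arbitrary n, Finset.mem_univ _⟩
  have hvi : 0 < ‖v i‖ := by
    obtain ⟨j, hj⟩ := Function.ne_iff.mp hv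
    exact lt_of_lt_of_le (norm_pos_iff.mpr hj) (hi j (Finset.mem_univ _))
  have h1 : ‖lam‖ * ‖v i‖ = ‖∑ j, A i j * v j‖ := by
    rw [← norm_mul]
    congr 1
    have := congrFun hAv i
    simp only [Matrix.mulVec, dotProduct, Pi.smul_apply, smul_eq_mul] at this
    rw [← this]
  have h2 : ‖∑ j, A i j * v j‖ ≤ r * ‖v i‖ := by
    calc ‖∑ j, A i j * v j‖ ≤ ∑ j, ‖A i j * v j‖ :=
          norm_sum_le _ _
      _ ≤ ∑ j, ‖A i j‖ * ‖v i‖ := by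
          refine Finset.sum_le_sum fun j _ => ?_
          rw [norm_mul]
          exact mul_le_mul_of_nonneg_left (hi j (Finset.mem_univ _)) (norm_nonneg _)
      _ = (∑ j, ‖A i j‖) * ‖v i‖ := by rw [Finset.sum_mul]
      _ ≤ r * ‖v i‖ :=
          mul_le_mul_of_nonneg_right (hr i) (norm_nonneg _)
  exact le_of_mul_le_mul_right (h1 ▸ h2) hvi

lemma gersh_real {n : Type*} [Fintype n] [Nonempty n] (A : Matrix n n ℝ) (lam : ℝ)
    (v : n → ℝ) (hv : v ≠ 0) (hAv : A.mulVec v = lam • v) (r : ℝ)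
    (hr : ∀ i, ∑ j, |A i j| ≤ r) : |lam| ≤ r := by
  obtain ⟨i, -, hi⟩ := Finset.exists_max_image Finset.univ (fun j => |v j|)
    ⟨Classical.arbitrary n, Finset.mem_univ _⟩
  have hvi : 0 < |v i| := by
    obtain ⟨j, hj⟩ := Function.ne_iff.mp hv
    exact lt_of_lt_of_le (abs_pos.mpr hj) (hi j (Finset.mem_univ _))
  have h1 : |lam| * |v i| = |∑ j, A i j * v j| := by
    rw [← abs_mul]
    congr 1
    have := congrFun hAv i
    simp only [Matrix.mulVec, dotProduct, Pi.smul_apply, smul_eq_mul] at this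
    rw [← this]
  have h2 : |∑ j, A i j * v j| ≤ r * |v i| := by
    calc |∑ j, A i j * v j| ≤ ∑ j, |A i j * v j| := Finset.abs_sum_le_sum_abs _ _
      _ ≤ ∑ j, |A i j| * |v i| := by
          refine Finset.sum_le_sum fun j _ => ?_
          rw [abs_mul]
          exact mul_le_mul_of_nonneg_left (hi j (Finset.mem_univ _)) (abs_nonneg _)
      _ = (∑ j, |A i j|) * |v i| := by rw [Finset.sum_mul]
      _ ≤ r * |v i| := mul_le_mul_of_nonneg_right (hr i) (abs_nonneg _)
  exact le_of_mul_le_mul_right (h1 ▸ h2) hvi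


/-- Theorem 6 (Spectrum of `AᵀA - I`): with `A = circ(G_0, …, G_{N-1})` the circulant
matrix of the discrete Green's coefficients, every complex eigenvalue `λ` of `A`
satisfies `|λ| < 1`, and every real eigenvalue of the symmetric matrix `AᵀA - I` is
strictly negative. -/
theorem theorem6_spectrum (D τ dx x₀ : ℝ) (hD : 0 < D) (hτ : 0 < τ) (hdx : 0 < dx)
    (N : ℕ) (hN : 1 ≤ N) :
    (∀ lam ∈ spectrum ℂ
        (Matrix.circulant (fun ℓ : Fin N => (Gcoef D τ x₀ dx ℓ.val : ℂ))),
      ‖lam‖ < 1) ∧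
    (∀ μ ∈ spectrum ℝ
        ((Matrix.circulant (fun ℓ : Fin N => Gcoef D τ x₀ dx ℓ.val))ᵀ *
          Matrix.circulant (fun ℓ : Fin N => Gcoef D τ x₀ dx ℓ.val) - 1),
      μ < 0) := by
  have hFin : Nonempty (Fin N) := ⟨⟨0, hN⟩⟩
  haveI : NeZero N := ⟨by omega⟩
  set G : Fin N → ℝ := fun ℓ => Gcoef D τ x₀ dx ℓ.val with hGdef
  set S : ℝ := ∑ ℓ ∈ Finset.range N, Gcoef D τ x₀ dx ℓ with hSdef
  have hS1 : S < 1 := sum_Gcoef_lt_one hD hτ hdx N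
  have hGpos : ∀ j : Fin N, 0 < G j := fun j => Gcoef_pos hD hτ hdx j.val
  have hS0 : 0 ≤ S := Finset.sum_nonneg fun ℓ _ => (Gcoef_pos hD hτ hdx ℓ).le
  have hrow : ∀ i : Fin N, ∑ j : Fin N, G (i - j) = S := by
    intro i
    have h := Equiv.sum_comp (Equiv.subLeft i) G
    simp only [Equiv.subLeft_apply] at h
    rw [h]
    exact Fin.sum_univ_eq_sum_range (fun k => Gcoef D τ x₀ dx k) N
  have hcol : ∀ i : Fin N, ∑ k : Fin N, G (k - i) = S := by
    intro i
    have h := Equiv.sum_comp (Equiv.subRight i) G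
    simp only [Equiv.subRight_apply] at h
    rw [h]
    exact Fin.sum_univ_eq_sum_range (fun k => Gcoef D τ x₀ dx k) N
  constructor
  · intro lam hlam
    obtain ⟨v, hv, hAv⟩ := eig_of_mem_spectrum _ _ hlam
    have hb : ‖lam‖ ≤ S := by
      refine gersh_complex _ lam v hv hAv S fun i => ?_
      have : ∀ j : Fin N,
          ‖(Matrix.circulant fun ℓ : Fin N => (Gcoef D τ x₀ dx ℓ.val : ℂ)) i j‖
            = G (i - j) := by
        intro j
        rw [Matrix.circulant_apply]
        rw [Complex.norm_real, Real.norm_eq_abs, abs_of_pos (hGpos _)]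
      rw [Finset.sum_congr rfl fun j _ => this j, hrow i]
    exact lt_of_le_of_lt hb hS1
  · intro μ hμ
    obtain ⟨v, hv, hMv⟩ := eig_of_mem_spectrum _ _ hμ
    rw [Matrix.sub_mulVec, Matrix.one_mulVec, sub_eq_iff_eq_add] at hMv
    have hMv' : ((Matrix.circulant G)ᵀ * Matrix.circulant G).mulVec v = (μ + 1) • v := by
      rw [hMv]; funext i; simp [add_smul]; ring
    have hb : |μ + 1| ≤ S * S := by
      refine gersh_real _ _ v hv hMv' (S * S) fun i => ?_
      have hentry : ∀ j : Fin N, ((Matrix.circulant G)ᵀ * Matrix.circulant G) i j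
          = ∑ k : Fin N, G (k - i) * G (k - j) := by
        intro j
        rw [Matrix.mul_apply]
        simp [Matrix.transpose_apply, Matrix.circulant_apply]
      have habs : ∀ j : Fin N, |((Matrix.circulant G)ᵀ * Matrix.circulant G) i j|
          = ∑ k : Fin N, G (k - i) * G (k - j) := by
        intro j
        rw [hentry j, abs_of_nonneg]
        exact Finset.sum_nonneg fun k _ => mul_nonneg (hGpos _).le (hGpos _).le
      rw [Finset.sum_congr rfl fun j _ => habs j, Finset.sum_comm]
      have : ∀ k : Fin N, ∑ j : Fin N, G (k - i) * G (k - j) = G (k - i) * S := by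
        intro k
        rw [← Finset.mul_sum, hrow k]
      rw [Finset.sum_congr rfl fun k _ => this k, ← Finset.sum_mul, hcol i]
    have hS2 : S * S < 1 := by nlinarith
    have := (abs_le.mp hb).2
    linarith
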